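/- Refined Hakimi–Mitchem–Schmeichel inequality (even case): Let G be a finite simple graph that admits an acyclic proper vertex coloring with c colors, where c is an even natural number. Then the edge set of G can be partitioned into at most c − 1 forests; in other words, the arboricity of G is at most c − 1. -/

import Mathlib

open SimpleGraph

private def pairIdx (n i j : ℕ) : ℕ :=
  if i = n then j % n else if j = n then i % n else ((i + j) * ((n+1)/2)) % n

private lemma pairIdx_symm (n i j : ℕ) : pairIdx n i j = pairIdx n j i := by
  unfold pairIdx
  rcases eq_or_ne i n with h | h <;> rcases eq_or_ne j n with h' | h' <;>
    simp [h, h', Nat.add_comm]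

private lemma pairIdx_lt (n : ℕ) (hn : 0 < n) (i j : ℕ) : pairIdx n i j < n := by
  unfold pairIdx
  split
  · exact Nat.mod_lt _ hn
  · split <;> exact Nat.mod_lt _ hn

private lemma pairIdx_matching (n : ℕ) (hn : Odd n) (a b b' : ℕ)
    (ha : a < n + 1) (hb : b < n + 1) (hb' : b' < n + 1)
    (hab : a ≠ b) (hab' : a ≠ b')
    (h : pairIdx n a b = pairIdx n a b') : b = b' := by
  have hnpos : 0 < n := hn.pos
  haveI : NeZero n := ⟨hnpos.ne'⟩
  obtain ⟨m, hm⟩ := hn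
  have hH : 2 * ((n + 1) / 2) = n + 1 := by omega
  have hone : ((n + 1 : ℕ) : ZMod n) = 1 := by
    push_cast
    simp [ZMod.natCast_self]
  have hcancel : ∀ x y : ZMod n, x * ((n+1)/2 : ℕ) = y * ((n+1)/2 : ℕ) → x = y := by
    intro x y hxy
    have h2 : ((2 : ℕ) : ZMod n) * ((n+1)/2 : ℕ) = 1 := by
      rw [← Nat.cast_mul, hH, hone]
    calc x = x * (((2 : ℕ) : ZMod n) * ((n+1)/2 : ℕ)) := by rw [h2, mul_one]
      _ = (x * ((n+1)/2 : ℕ)) * 2 := by push_cast; ring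
      _ = (y * ((n+1)/2 : ℕ)) * 2 := by rw [hxy]
      _ = y * (((2 : ℕ) : ZMod n) * ((n+1)/2 : ℕ)) := by push_cast; ring
      _ = y := by rw [h2, mul_one]
  have hinj : ∀ x y : ℕ, x < n → y < n → (x : ZMod n) = y → x = y := by
    intro x y hx hy hxy
    have := congrArg ZMod.val hxy
    rwa [ZMod.val_cast_of_lt hx, ZMod.val_cast_of_lt hy] at this
  have cast_eq : ∀ x y : ℕ, (x * ((n+1)/2)) % n = (y * ((n+1)/2)) % n →
      (x : ZMod n) = y := by
    intro x y hxy
    have h1 : ((x * ((n+1)/2) % n : ℕ) : ZMod n) = ((y * ((n+1)/2) % n : ℕ) : ZMod n) := by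
      rw [hxy]
    rw [ZMod.natCast_mod, ZMod.natCast_mod] at h1
    push_cast at h1
    exact hcancel _ _ h1
  have haux : ∀ x : ℕ, ((2 * x) * ((n+1)/2)) % n = x % n := by
    intro x
    have hx : (2 * x) * ((n+1)/2) = x + x * n := by
      rw [mul_comm 2 x, mul_assoc, hH]; ring
    rw [hx, Nat.add_mul_mod_self_right]
  unfold pairIdx at h
  rcases eq_or_ne a n with han | han
  · have hb1 : b < n := by omega
    have hb'1 : b' < n := by omega
    simpa [han, Nat.mod_eq_of_lt hb1, Nat.mod_eq_of_lt hb'1] using h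
  · have ha1 : a < n := by omega
    rcases eq_or_ne b n with hbn | hbn
    · rcases eq_or_ne b' n with hb'n | hb'n
      · omega
      · exfalso
        have hb'1 : b' < n := by omega
        rw [if_neg han, if_pos hbn, if_neg han, if_neg hb'n] at h
        -- h : a % n = ((a + b') * ((n+1)/2)) % n
        rw [← haux a] at h
        have := cast_eq _ _ h
        push_cast at this
        rw [two_mul] at this
        have : (a : ZMod n) = b' := by
          have h3 : (a : ZMod n) + a = a + b' := by linear_combination this
          exact add_left_cancel h3
        exact hab' (hinj a b' ha1 hb'1 this)
    · have hb1 : b < n := by omega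
      rcases eq_or_ne b' n with hb'n | hb'n
      · exfalso
        rw [if_neg han, if_neg hbn, if_neg han, if_pos hb'n] at h
        rw [← haux a] at h
        have := cast_eq _ _ h.symm
        push_cast at this
        rw [two_mul] at this
        have : (a : ZMod n) = b := by
          have h3 : (a : ZMod n) + a = a + b := by linear_combination this
          exact add_left_cancel h3
        exact hab (hinj a b ha1 hb1 this)
      · have hb'1 : b' < n := by omega
        rw [if_neg han, if_neg hbn, if_neg han, if_neg hb'n] at h
        have := cast_eq _ _ h
        push_cast at this
        have : (b : ZMod n) = b' := add_left_cancel this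
        exact hinj b b' hb1 hb'1 this

private lemma lift_walk {V : Type*} {G H : SimpleGraph V} (S : Set V)
    (hle : H ≤ G) (hS : ∀ a b, H.Adj a b → a ∈ S → b ∈ S) :
    ∀ {u w : V} (p : H.Walk u w) (hu : u ∈ S) (hw : w ∈ S),
      ∃ q : (G.induce S).Walk ⟨u, hu⟩ ⟨w, hw⟩,
        q.support.map Subtype.val = p.support ∧
        q.edges.map (Sym2.map Subtype.val) = p.edges := by
  intro u w p
  induction p with
  | nil => intro hu hw; exact ⟨.nil, by simp, by simp⟩
  | @cons u b w h p ih =>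
    intro hu hw
    have hb : b ∈ S := hS _ _ h hu
    obtain ⟨q, hq1, hq2⟩ := ih hb hw
    have e : (G.induce S).Adj ⟨u, hu⟩ ⟨b, hb⟩ := hle h
    refine ⟨.cons e q, by simp only [Walk.support_cons, List.map_cons, hq1],
      by simp only [Walk.edges_cons, List.map_cons, hq2, Sym2.map_pair_eq]⟩

private lemma acyclic_of_closed {V : Type*} {G H : SimpleGraph V} (S : Set V)
    (hle : H ≤ G) (hS : ∀ a b, H.Adj a b → a ∈ S → b ∈ S)
    (hA : (G.induce S).IsAcyclic) {v : V} (hv : v ∈ S)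
    (p : H.Walk v v) : ¬ p.IsCycle := by
  intro hp
  obtain ⟨q, hq1, hq2⟩ := lift_walk S hle hS p hv hv
  refine hA q ?_
  have hinj : Function.Injective (Sym2.map (Subtype.val : S → V)) :=
    Sym2.map.injective Subtype.val_injective
  refine ⟨⟨⟨?_⟩, ?_⟩, ?_⟩
  · -- edges nodup
    have := hp.edges_nodup
    rw [← hq2] at this
    exact this.of_map _
  · -- q ≠ nil
    intro hnil
    have hlen : q.support.length = p.support.length := by
      rw [← hq1, List.length_map]
    rw [hnil] at hlen
    simp [SimpleGraph.Walk.support_nil] at hlen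
    exact hp.ne_nil (Walk.nil_iff_eq_nil.mp hlen)
  · -- tail nodup
    have := hp.support_nodup
    rw [← hq1] at this
    rw [← List.map_tail] at this
    exact this.of_map _

/-- Refined Hakimi–Mitchem–Schmeichel inequality (even case): if a finite simple graph
admits an acyclic proper vertex coloring with `c` colors and `c` is even, then its edge
set can be partitioned into at most `c - 1` forests. -/
theorem refined_HMS_even {V : Type*} [Fintype V] (G : SimpleGraph V) (c : ℕ)
    (hc : Even c) (f : V → Fin c)
    (hproper : ∀ u v : V, G.Adj u v → f u ≠ f v)
    (hacyclic : ∀ i j : Fin c, i ≠ j →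
      (G.induce {v : V | f v = i ∨ f v = j}).IsAcyclic) :
    ∃ F : Fin (c - 1) → Set (Sym2 V),
      (∀ k, F k ⊆ G.edgeSet) ∧
      (∀ k, (SimpleGraph.fromEdgeSet (F k)).IsAcyclic) ∧
      (∀ k l, k ≠ l → Disjoint (F k) (F l)) ∧
      (⋃ k, F k) = G.edgeSet := by
  rcases Nat.eq_zero_or_pos c with hc0 | hcpos
  · -- c = 0 : V has no usable vertices, edge set is empty
    subst hc0
    haveI : IsEmpty V := ⟨fun v => (f v).elim0⟩
    refine ⟨fun k => ∅, fun k => by simp, fun k => ?_, fun k l _ => by simp, ?_⟩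
    · simp only [SimpleGraph.fromEdgeSet_empty]
      intro v p hp
      exact IsEmpty.elim ‹_› v
    · have hE : G.edgeSet = ∅ := by
        ext e
        refine Sym2.ind (fun u v => ?_) e
        exact (IsEmpty.false u).elim
      simp [hE]
  · set n := c - 1 with hn
    have hcn : c = n + 1 := by omega
    have hodd : Odd n := by
      rcases hc with ⟨m, hm⟩
      exact ⟨m - 1, by omega⟩
    have hnpos : 0 < n := hodd.pos
    set μe : Sym2 V → ℕ :=
      Sym2.lift ⟨fun u v => pairIdx n (f u).1 (f v).1,
        fun u v => pairIdx_symm n (f u).1 (f v).1⟩ with hμe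
    refine ⟨fun k => {e | e ∈ G.edgeSet ∧ μe e = k.1}, ?_, ?_, ?_, ?_⟩
    · intro k e he; exact he.1
    · -- acyclicity
      intro k v p hp
      cases p with
      | nil => exact hp.ne_nil rfl
      | @cons _ w _ h q =>
        rw [SimpleGraph.fromEdgeSet_adj] at h
        obtain ⟨⟨hedge, hμ⟩, hne⟩ := h
        have hGvw : G.Adj v w := hedge
        have hij : f v ≠ f w := hproper v w hGvw
        have hA := hacyclic (f v) (f w) hij
        have hμ' : pairIdx n (f v).1 (f w).1 = k.1 := hμ
        have hle : SimpleGraph.fromEdgeSet {e | e ∈ G.edgeSet ∧ μe e = k.1} ≤ G := by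
          intro a b hab
          rw [SimpleGraph.fromEdgeSet_adj] at hab
          exact hab.1.1
        have hclosed : ∀ a b, (SimpleGraph.fromEdgeSet
            {e | e ∈ G.edgeSet ∧ μe e = k.1}).Adj a b →
            a ∈ {x : V | f x = f v ∨ f x = f w} → b ∈ {x : V | f x = f v ∨ f x = f w} := by
          intro a b hab haS
          rw [SimpleGraph.fromEdgeSet_adj] at hab
          obtain ⟨⟨habE, habμ⟩, habne⟩ := hab
          have hGab : G.Adj a b := habE
          have hfab : f a ≠ f b := hproper a b hGab
          have e1 : pairIdx n (f a).1 (f b).1 = k.1 := habμ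
          have hbound : ∀ x : V, (f x).1 < n + 1 := fun x => hcn ▸ (f x).2
          rcases haS with hai | haj
          · rw [hai] at e1
            have h1 : pairIdx n (f v).1 (f b).1 = pairIdx n (f v).1 (f w).1 := by
              rw [e1, hμ']
            have hvb : (f v).1 ≠ (f b).1 :=
              fun hh => hfab (by rw [hai]; exact Fin.ext hh)
            have hvw : (f v).1 ≠ (f w).1 := fun hh => hij (Fin.ext hh)
            have : (f b).1 = (f w).1 := pairIdx_matching n hodd (f v).1 (f b).1 (f w).1
              (hbound v) (hbound b) (hbound w) hvb hvw h1
            exact Or.inr (Fin.ext this)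
          · rw [haj] at e1
            have h1 : pairIdx n (f w).1 (f b).1 = pairIdx n (f w).1 (f v).1 := by
              rw [e1, pairIdx_symm]; exact hμ'.symm
            have hwb : (f w).1 ≠ (f b).1 :=
              fun hh => hfab (by rw [haj]; exact Fin.ext hh)
            have hwv : (f w).1 ≠ (f v).1 := fun hh => hij (Fin.ext hh.symm)
            have : (f b).1 = (f v).1 := pairIdx_matching n hodd (f w).1 (f b).1 (f v).1
              (hbound w) (hbound b) (hbound v) hwb hwv h1
            exact Or.inl (Fin.ext this)
        have hv : v ∈ {x : V | f x = f v ∨ f x = f w} := Or.inl rfl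
        exact acyclic_of_closed _ hle hclosed hA hv (.cons (by
          rw [SimpleGraph.fromEdgeSet_adj]; exact ⟨⟨hedge, hμ⟩, hne⟩) q) hp
    · intro k l hkl
      rw [Set.disjoint_left]
      intro e hek hel
      exact hkl (Fin.ext (hek.2 ▸ hel.2 ▸ rfl))
    · apply subset_antisymm
      · exact Set.iUnion_subset fun k e he => he.1
      · intro e he
        have hlt : μe e < n := by
          induction e with
          | _ u v => exact pairIdx_lt n hnpos _ _
        have hlt' : μe e < c - 1 := hlt
        exact Set.mem_iUnion.mpr ⟨⟨μe e, hlt'⟩, he, rfl⟩
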